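/- Let N ≥ 2, α, β ∈ ℝ, ε > 0, and let a ∈ ℝ^N be such that every a_i lies in {0, π/2, π, 3π/2} (modulo 2π) and Σ_{j=1}^N exp(2 i a_j) = 0 (a 4-phase cluster of splay type). Then the characteristic polynomial of the linearization matrix J(a) equals X^{N−1} · (X + ε)^{N(N−1)+1} · (X + ε + (1/2) sin(α−β))^{N−2} · (X² + (ε + sin α cos β) X + ε sin(α+β)). -/

import Mathlib

set_option maxHeartbeats 1000000
set_option synthInstance.maxHeartbeats 200000


open Real Matrix Polynomial

/-- The phase block of the linearization of the adaptive phase-oscillator network at a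
one-cluster state with phase lags `a`. -/
noncomputable def linA (N : ℕ) (α β : ℝ) (a : Fin N → ℝ) : Matrix (Fin N) (Fin N) ℝ :=
  Matrix.of fun i j =>
    if i = j then
      -(1 / 2) * Real.sin (α - β) - (1 / (N : ℝ)) * Real.sin β * Real.cos α
        + (1 / (2 * (N : ℝ))) * ∑ k, Real.sin (2 * (a i - a k) + α + β)
    else (1 / (2 * (N : ℝ))) * (Real.sin (α - β) - Real.sin (2 * (a i - a j) + α + β))

/-- The phase-to-coupling block of the linearization. -/
noncomputable def linB (N : ℕ) (α : ℝ) (a : Fin N → ℝ) :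
    Matrix (Fin N) (Fin N × Fin N) ℝ :=
  Matrix.of fun k p =>
    if k = p.1 then -(1 / (N : ℝ)) * Real.sin (a p.1 - a p.2 + α) else 0

/-- The coupling-to-phase block of the linearization. -/
noncomputable def linC (N : ℕ) (β ε : ℝ) (a : Fin N → ℝ) :
    Matrix (Fin N × Fin N) (Fin N) ℝ :=
  Matrix.of fun p l =>
    if p.1 = p.2 then 0
    else if l = p.1 then -ε * Real.cos (a p.1 - a p.2 + β)
    else if l = p.2 then ε * Real.cos (a p.1 - a p.2 + β)
    else 0

/-- The linearization matrix `J(a)` of the adaptive phase-oscillator network at a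
one-cluster state with phase lags `a`. -/
noncomputable def linJ (N : ℕ) (α β ε : ℝ) (a : Fin N → ℝ) :
    Matrix (Fin N ⊕ Fin N × Fin N) (Fin N ⊕ Fin N × Fin N) ℝ :=
  Matrix.fromBlocks (linA N α β a) (linB N α a) (linC N β ε a)
    (-(ε • (1 : Matrix (Fin N × Fin N) (Fin N × Fin N) ℝ)))


lemma det_aux {F : Type*} [Field F] (N : ℕ) (s : Fin N → F) (p q r : F)
    (hp : p ≠ 0) (hsum : ∑ i, s i = 0) (hsq : ∀ i, s i ^ 2 = 1) (hN : 2 ≤ N) :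
    (p • (1 : Matrix (Fin N) (Fin N) F) + Matrix.of fun i j => q + r * s i * s j).det
      = p ^ (N - 2) * (p + N * q) * (p + N * r) := by
  set U : Matrix (Fin N) (Fin 2) F := Matrix.of fun i k => if k = 0 then 1 else s i with hU
  set V : Matrix (Fin 2) (Fin N) F := Matrix.of fun k j => if k = 0 then q else r * s j with hV
  have hUV : U * V = Matrix.of fun i j => q + r * s i * s j := by
    ext i j
    simp [hU, hV, Matrix.mul_apply, Fin.sum_univ_two]
    ring
  have h5 : p • (1 : Matrix (Fin N) (Fin N) F) + Matrix.of (fun i j => q + r * s i * s j)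
      = p • ((1 : Matrix (Fin N) (Fin N) F) + U * (p⁻¹ • V)) := by
    rw [smul_add, Matrix.mul_smul, smul_smul, mul_inv_cancel₀ hp, one_smul, hUV]
  rw [h5, Matrix.det_smul, Matrix.det_one_add_mul_comm, Fintype.card_fin]
  have e00 : ((p⁻¹ • V) * U) 0 0 = p⁻¹ * (N * q) := by
    simp [hU, hV, Matrix.mul_apply, Finset.sum_const, Finset.card_univ]
    ring
  have e01 : ((p⁻¹ • V) * U) 0 1 = 0 := by
    simp [hU, hV, Matrix.mul_apply, ← Finset.mul_sum, hsum]
  have e10 : ((p⁻¹ • V) * U) 1 0 = 0 := by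
    rw [Matrix.mul_apply]
    have h6 : ∀ j : Fin N, (p⁻¹ • V) 1 j * U j 0 = (p⁻¹ * r) * s j := by
      intro j; simp [hU, hV]; ring
    rw [Finset.sum_congr rfl fun j _ => h6 j, ← Finset.mul_sum, hsum, mul_zero]
  have e11 : ((p⁻¹ • V) * U) 1 1 = p⁻¹ * (N * r) := by
    rw [Matrix.mul_apply]
    have h7 : ∀ j : Fin N, (p⁻¹ • V) 1 j * U j 1 = (p⁻¹ * r) * s j ^ 2 := by
      intro j; simp [hU, hV]; ring
    rw [Finset.sum_congr rfl fun j _ => h7 j]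
    simp only [hsq]
    simp [Finset.sum_const, Finset.card_univ]
    ring
  rw [Matrix.det_fin_two]
  simp only [Matrix.add_apply, Matrix.one_apply, e00, e01, e10, e11]
  norm_num
  obtain ⟨n2, rfl⟩ : ∃ n2, N = n2 + 2 := ⟨N - 2, by omega⟩
  simp only [Nat.add_sub_cancel]
  field_simp
  ring

lemma key1 (x y α β : ℝ) (hx : Real.sin (2*x) = 0) (hy : Real.sin (2*y) = 0) :
    Real.sin (2*(x - y) + α + β) = Real.cos (2*x) * Real.cos (2*y) * Real.sin (α+β) := by
  have h1 : 2*(x-y) + α + β = (2*x - 2*y) + (α+β) := by ring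
  rw [h1, Real.sin_add, Real.sin_sub, Real.cos_sub, hx, hy]
  ring

lemma key2 (x y α β : ℝ) (hx : Real.sin (2*x) = 0) (hy : Real.sin (2*y) = 0) :
    Real.sin (x - y + α) * Real.cos (x - y + β)
      = (Real.cos (2*x) * Real.cos (2*y) * Real.sin (α+β) + Real.sin (α-β)) / 2 := by
  have h2 : Real.sin ((x-y+α) + (x-y+β)) + Real.sin ((x-y+α) - (x-y+β))
      = 2 * (Real.sin (x-y+α) * Real.cos (x-y+β)) := by
    rw [Real.sin_add, Real.sin_sub]; ring
  have h3 : (x-y+α) + (x-y+β) = 2*(x-y) + α + β := by ring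
  have h4 : (x-y+α) - (x-y+β) = α - β := by ring
  rw [h3, h4, key1 x y α β hx hy] at h2
  linarith

lemma linA_eq (N : ℕ) (hN : 2 ≤ N) (α β : ℝ) (a : Fin N → ℝ)
    (hsin : ∀ i, Real.sin (2 * a i) = 0)
    (hsq : ∀ i, Real.cos (2 * a i) ^ 2 = 1)
    (hsum : ∑ i, Real.cos (2 * a i) = 0) :
    linA N α β a = Matrix.of fun i j =>
      (if i = j then -(Real.sin (α-β))/2 else 0) + Real.sin (α-β)/(2*N)
        - Real.sin (α+β)/(2*N) * (Real.cos (2*a i) * Real.cos (2*a j)) := by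
  have hNr : (N : ℝ) ≠ 0 := by positivity
  ext i j
  by_cases h : i = j
  · subst h
    simp only [linA, Matrix.of_apply, if_pos rfl]
    have hs : ∀ k : Fin N, Real.sin (2 * (a i - a k) + α + β)
        = (Real.cos (2*a i) * Real.sin (α+β)) * Real.cos (2*a k) := by
      intro k
      rw [key1 (a i) (a k) α β (hsin i) (hsin k)]; ring
    rw [Finset.sum_congr rfl fun k _ => hs k, ← Finset.mul_sum, hsum, mul_zero, mul_zero]
    have hcc : Real.cos (2*a i) * Real.cos (2*a i) = 1 := by
      have := hsq i; nlinarith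
    rw [hcc]
    simp only [Real.sin_add, Real.sin_sub, eq_self_iff_true, if_true]
    field_simp
    ring
  · simp only [linA, Matrix.of_apply, if_neg h]
    rw [key1 (a i) (a j) α β (hsin i) (hsin j)]
    field_simp
    ring

lemma linBC_eq (N : ℕ) (hN : 2 ≤ N) (α β ε : ℝ) (a : Fin N → ℝ)
    (hsin : ∀ i, Real.sin (2 * a i) = 0)
    (hsq : ∀ i, Real.cos (2 * a i) ^ 2 = 1)
    (hsum : ∑ i, Real.cos (2 * a i) = 0) :
    linB N α a * linC N β ε a = Matrix.of fun k l =>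
      (if k = l then ε * Real.sin (α-β)/2 else 0) - ε * Real.sin (α-β)/(2*N)
        - ε * Real.sin (α+β)/(2*N) * (Real.cos (2*a k) * Real.cos (2*a l)) := by
  have hNr : (N : ℝ) ≠ 0 := by positivity
  ext k l
  rw [Matrix.mul_apply, Fintype.sum_prod_type]
  have hout : ∀ i : Fin N, i ≠ k → ∑ j, linB N α a k (i, j) * linC N β ε a (i, j) l = 0 := by
    intro i hi
    apply Finset.sum_eq_zero
    intro j _
    simp [linB, (Ne.symm hi)]
  rw [Finset.sum_eq_single k (fun i _ hi => hout i hi) (by simp)]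
  by_cases hkl : k = l
  · subst hkl
    have hterm : ∀ j : Fin N, linB N α a k (k, j) * linC N β ε a (k, j) k
        = (ε/(2*(N:ℝ)) * Real.sin (α+β) * Real.cos (2*a k)) * Real.cos (2*a j)
          + ε * Real.sin (α-β)/(2*(N:ℝ))
          - (if k = j then (ε/(2*(N:ℝ)) * Real.sin (α+β) * Real.cos (2*a k)) * Real.cos (2*a j)
              + ε * Real.sin (α-β)/(2*(N:ℝ)) else 0) := by
      intro j
      by_cases hj : k = j
      · subst hj; simp [linB, linC]
      · have hB : linB N α a k (k, j) = -(1 / (N:ℝ)) * Real.sin (a k - a j + α) :=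
          if_pos rfl
        have hC : linC N β ε a (k, j) k = -ε * Real.cos (a k - a j + β) :=
          (if_neg hj).trans (if_pos rfl)
        rw [hB, hC, if_neg hj]
        have hk2 := key2 (a k) (a j) α β (hsin k) (hsin j)
        linear_combination (ε/(N:ℝ)) * hk2
    rw [Finset.sum_congr rfl fun j _ => hterm j]
    rw [Finset.sum_sub_distrib, Finset.sum_add_distrib, ← Finset.mul_sum, hsum,
      Finset.sum_const, Finset.card_univ, Fintype.card_fin, Finset.sum_ite_eq]
    simp only [Finset.mem_univ, if_pos, mul_zero, zero_add, nsmul_eq_mul]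
    have hcc : Real.cos (2*a k) * Real.cos (2*a k) = 1 := by
      have := hsq k; nlinarith
    have hcc2 : (ε/(2*(N:ℝ)) * Real.sin (α+β) * Real.cos (2*a k)) * Real.cos (2*a k)
        = ε/(2*(N:ℝ)) * Real.sin (α+β) := by
      calc (ε/(2*(N:ℝ)) * Real.sin (α+β) * Real.cos (2*a k)) * Real.cos (2*a k)
          = ε/(2*(N:ℝ)) * Real.sin (α+β) * (Real.cos (2*a k) * Real.cos (2*a k)) := by ring
        _ = _ := by rw [hcc, mul_one]
    rw [hcc2]
    simp only [Matrix.of_apply, if_pos rfl, eq_self_iff_true, if_true]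
    rw [hcc]
    field_simp
    ring
  · have hterm : ∀ j : Fin N, j ≠ l → linB N α a k (k, j) * linC N β ε a (k, j) l = 0 := by
      intro j hj
      by_cases hkj : k = j
      · subst hkj; simp [linC]
      · simp [linB, linC, hkj, Ne.symm hkl, Ne.symm hj]
    rw [Finset.sum_eq_single l (fun j _ hj => hterm j hj) (by simp)]
    have hB : linB N α a k (k, l) = -(1 / (N:ℝ)) * Real.sin (a k - a l + α) :=
      if_pos rfl
    have hC : linC N β ε a (k, l) l = ε * Real.cos (a k - a l + β) :=
      (if_neg hkl).trans ((if_neg (Ne.symm hkl)).trans (if_pos rfl))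
    rw [hB, hC]
    simp only [Matrix.of_apply]
    rw [if_neg hkl]
    have hk2 := key2 (a k) (a l) α β (hsin k) (hsin l)
    linear_combination (-(ε/(N:ℝ))) * hk2

noncomputable abbrev φR : Polynomial ℝ →+* RatFunc ℝ := algebraMap (Polynomial ℝ) (RatFunc ℝ)
noncomputable abbrev ψR : ℝ →+* RatFunc ℝ := φR.comp Polynomial.C

lemma cm_map {n : Type*} [Fintype n] [DecidableEq n] (M : Matrix n n ℝ) :
    (charmatrix M).map φR = (φR X) • (1 : Matrix n n (RatFunc ℝ)) - M.map ψR := by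
  ext i j
  by_cases h : i = j
  · subst h
    simp [charmatrix_apply_eq, Matrix.map_apply, Matrix.one_apply, ψR]
  · rw [Matrix.map_apply, charmatrix_apply_ne M i j h]
    simp [Matrix.map_apply, Matrix.one_apply, h, ψR]

/-- The characteristic polynomial of the linearization at a `4`-phase cluster of splay
type (all phases in `{0, π/2, π, 3π/2}` modulo `2π`, with vanishing second moment order
parameter). -/
theorem charpoly_four_phase_cluster
    (N : ℕ) (hN : 2 ≤ N) (α β ε : ℝ) (hε : 0 < ε) (a : Fin N → ℝ)
    (ha : ∀ i, ∃ m : ℤ, a i = m * (Real.pi / 2))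
    (hsplay : ∑ j, Complex.exp (2 * Complex.I * (a j : ℂ)) = 0) :
    (linJ N α β ε a).charpoly =
      X ^ (N - 1) * (X + C ε) ^ (N * (N - 1) + 1) *
        (X + C (ε + (1 / 2) * Real.sin (α - β))) ^ (N - 2) *
        (X ^ 2 + C (ε + Real.sin α * Real.cos β) * X + C (ε * Real.sin (α + β))) := by
  -- basic facts from the hypotheses
  have hsin : ∀ i, Real.sin (2 * a i) = 0 := by
    intro i
    obtain ⟨m, hm⟩ := ha i
    rw [hm, show 2 * ((m : ℝ) * (Real.pi / 2)) = (m : ℝ) * Real.pi by ring,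
      Real.sin_int_mul_pi]
  have hsq : ∀ i, Real.cos (2 * a i) ^ 2 = 1 := by
    intro i
    have h := Real.sin_sq_add_cos_sq (2 * a i)
    rw [hsin i] at h
    nlinarith
  have hsum : ∑ i, Real.cos (2 * a i) = 0 := by
    have hterm : ∀ j, Complex.exp (2 * Complex.I * (a j : ℂ))
        = ((Real.cos (2 * a j) : ℝ) : ℂ) := by
      intro j
      rw [show (2 : ℂ) * Complex.I * (a j : ℂ) = ((2 * a j : ℝ) : ℂ) * Complex.I by
        push_cast; ring, Complex.exp_mul_I, ← Complex.ofReal_cos, ← Complex.ofReal_sin,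
        hsin j]
      simp
    rw [Finset.sum_congr rfl fun j _ => hterm j] at hsplay
    exact_mod_cast hsplay
  have hNr : (N : ℝ) ≠ 0 := by positivity
  haveI : CharZero (RatFunc ℝ) :=
    charZero_of_injective_algebraMap (algebraMap ℝ (RatFunc ℝ)).injective
  have hNK : ((N : ℕ) : RatFunc ℝ) ≠ 0 := Nat.cast_ne_zero.mpr (by omega)
  -- injectivity
  apply RatFunc.algebraMap_injective ℝ
  set t : RatFunc ℝ := φR X with ht
  set e : RatFunc ℝ := ψR ε with he
  have hte : t + e ≠ 0 := by
    have h1 : t + e = φR (X + Polynomial.C ε) := by rw [_root_.map_add]; rfl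
    rw [h1]
    exact (map_ne_zero_iff φR (RatFunc.algebraMap_injective ℝ)).mpr
      (Polynomial.monic_X_add_C ε).ne_zero
  set w₁ : RatFunc ℝ := ψR (Real.sin (α - β)) with hw₁
  set w₂ : RatFunc ℝ := ψR (Real.sin (α + β)) with hw₂
  set p : RatFunc ℝ := t + w₁/2 - (t+e)⁻¹ * (e * w₁/2) with hp
  set q : RatFunc ℝ := -(w₁/(2*(N:RatFunc ℝ))) + (t+e)⁻¹ * (e * w₁/(2*(N:RatFunc ℝ))) with hq
  set r : RatFunc ℝ := w₂/(2*(N:RatFunc ℝ)) + (t+e)⁻¹ * (e * w₂/(2*(N:RatFunc ℝ))) with hr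
  have hCsplit : φR (Polynomial.C (ε + Real.sin (α-β)/2)) = e + w₁/2 := by
    show ψR _ = _
    rw [_root_.map_add, map_div₀, map_ofNat, he, hw₁]
  have hpne : p ≠ 0 := by
    have h1 : p * (t+e) = t * (t + e + w₁/2) := by
      rw [hp]; field_simp; ring
    have h2 : t * (t + e + w₁/2) = φR (X * (X + Polynomial.C (ε + Real.sin (α-β)/2))) := by
      rw [_root_.map_mul, _root_.map_add, hCsplit, ht]
      ring
    have h3 : φR (X * (X + Polynomial.C (ε + Real.sin (α-β)/2))) ≠ 0 :=
      (map_ne_zero_iff φR (RatFunc.algebraMap_injective ℝ)).mpr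
        (mul_ne_zero Polynomial.X_ne_zero (Polynomial.monic_X_add_C _).ne_zero)
    intro h0
    rw [h0, zero_mul] at h1
    exact h3 (h2 ▸ h1.symm)
  -- compute the image of the characteristic polynomial
  have hLHS : φR (linJ N α β ε a).charpoly
      = (t+e)^(N*N) * (p ^ (N - 2) * (p + N * q) * (p + N * r)) := by
    rw [Matrix.charpoly, φR.map_det, RingHom.mapMatrix_apply, linJ, charmatrix_fromBlocks,
      Matrix.fromBlocks_map]
    have b12 : (-((linB N α a).map Polynomial.C)).map φR = -((linB N α a).map ψR) := by
      ext i j; simp [Matrix.map_apply, ψR]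
    have b21 : (-((linC N β ε a).map Polynomial.C)).map φR = -((linC N β ε a).map ψR) := by
      ext i j; simp [Matrix.map_apply, ψR]
    have b22 : (charmatrix (-(ε • (1 : Matrix (Fin N × Fin N) (Fin N × Fin N) ℝ)))).map φR
        = (t+e) • (1 : Matrix (Fin N × Fin N) (Fin N × Fin N) (RatFunc ℝ)) := by
      rw [cm_map]
      have hmap : (-(ε • (1 : Matrix (Fin N × Fin N) (Fin N × Fin N) ℝ))).map ψR
          = -(e • (1 : Matrix (Fin N × Fin N) (Fin N × Fin N) (RatFunc ℝ))) := by
        ext i j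
        by_cases h : i = j
        · subst h
          simp only [Matrix.map_apply, Matrix.neg_apply, Matrix.smul_apply, Matrix.one_apply_eq,
            smul_eq_mul, mul_one, _root_.map_neg, he]
        · simp only [Matrix.map_apply, Matrix.neg_apply, Matrix.smul_apply, Matrix.one_apply_ne h,
            smul_eq_mul, mul_zero, neg_zero, map_zero]
      rw [hmap, sub_neg_eq_add, ← ht, add_smul]
    rw [cm_map, b12, b21, b22]
    haveI : Invertible ((t+e) • (1 : Matrix (Fin N × Fin N) (Fin N × Fin N) (RatFunc ℝ))) :=
      ⟨(t+e)⁻¹ • 1, by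
        rw [Matrix.smul_mul, Matrix.mul_smul, smul_smul, inv_mul_cancel₀ hte, one_mul, one_smul], by
        rw [Matrix.smul_mul, Matrix.mul_smul, smul_smul, mul_inv_cancel₀ hte, one_mul, one_smul]⟩
    rw [Matrix.det_fromBlocks₂₂]
    have hinv : ⅟((t+e) • (1 : Matrix (Fin N × Fin N) (Fin N × Fin N) (RatFunc ℝ)))
        = (t+e)⁻¹ • (1 : Matrix (Fin N × Fin N) (Fin N × Fin N) (RatFunc ℝ)) :=
      invOf_eq_right_inv (by
        rw [Matrix.smul_mul, Matrix.mul_smul, smul_smul, mul_inv_cancel₀ hte, one_mul, one_smul])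
    rw [hinv]
    have hdetD : ((t+e) • (1 : Matrix (Fin N × Fin N) (Fin N × Fin N) (RatFunc ℝ))).det
        = (t+e)^(N*N) := by
      rw [Matrix.det_smul, Matrix.det_one, mul_one, Fintype.card_prod, Fintype.card_fin]
    rw [hdetD]
    congr 1
    have hBC : -(linB N α a).map ψR
          * ((t+e)⁻¹ • (1 : Matrix (Fin N × Fin N) (Fin N × Fin N) (RatFunc ℝ)))
          * -(linC N β ε a).map ψR
        = (t+e)⁻¹ • ((linB N α a * linC N β ε a).map ψR) := by
      rw [Matrix.mul_smul, Matrix.mul_one, Matrix.smul_mul, Matrix.neg_mul, Matrix.mul_neg,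
        neg_neg, Matrix.map_mul]
    rw [hBC]
    have hinner : φR X • (1 : Matrix (Fin N) (Fin N) (RatFunc ℝ)) - (linA N α β a).map ψR
          - (t+e)⁻¹ • ((linB N α a * linC N β ε a).map ψR)
        = p • (1 : Matrix (Fin N) (Fin N) (RatFunc ℝ))
          + Matrix.of (fun i j => q + r * ψR (Real.cos (2 * a i)) * ψR (Real.cos (2 * a j))) := by
      rw [linA_eq N hN α β a hsin hsq hsum, linBC_eq N hN α β ε a hsin hsq hsum]
      ext i j
      by_cases h : i = j
      · subst h
        simp only [Matrix.sub_apply, Matrix.add_apply, Matrix.smul_apply, Matrix.one_apply_eq,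
          Matrix.map_apply, Matrix.of_apply, eq_self_iff_true, if_true, smul_eq_mul,
          _root_.map_sub, _root_.map_add, _root_.map_mul, map_div₀, _root_.map_neg,
          map_natCast, map_ofNat]
        rw [hp, hq, hr, ht, hw₁, hw₂, he]
        ring
      · simp only [Matrix.sub_apply, Matrix.add_apply, Matrix.smul_apply, Matrix.one_apply_ne h,
          Matrix.map_apply, Matrix.of_apply, if_neg h, smul_eq_mul, _root_.map_sub,
          _root_.map_add, _root_.map_mul, map_div₀, _root_.map_neg, _root_.map_zero,
          map_natCast, map_ofNat]
        rw [hp, hq, hr, ht, hw₁, hw₂, he]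
        ring
    rw [hinner]
    rw [det_aux N (fun i => ψR (Real.cos (2 * a i))) p q r hpne
      (by rw [← map_sum, hsum, map_zero])
      (fun i => by rw [← map_pow, hsq i, _root_.map_one]) hN]
  rw [hLHS]
  -- compute the image of the right-hand side
  have hw3 : ψR (Real.sin α * Real.cos β) = (w₁ + w₂)/2 := by
    have hreal : Real.sin α * Real.cos β * 2 = Real.sin (α-β) + Real.sin (α+β) := by
      rw [Real.sin_add, Real.sin_sub]; ring
    have h := congrArg ψR hreal
    rw [_root_.map_mul, map_ofNat, _root_.map_add, ← hw₁, ← hw₂] at h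
    rw [hw₁, hw₂, ← h]
    ring
  have f1 : φR (X ^ (N-1)) = t^(N-1) := by rw [map_pow]
  have f2 : φR ((X + C ε)^(N*(N-1)+1)) = (t+e)^(N*(N-1)+1) := by
    rw [map_pow, _root_.map_add]; rfl
  have f3 : φR ((X + C (ε + (1/2) * Real.sin (α-β)))^(N-2)) = (t + e + w₁/2)^(N-2) := by
    rw [map_pow, _root_.map_add]
    have hcc : φR (C (ε + (1/2) * Real.sin (α-β))) = e + w₁/2 := by
      show ψR _ = _
      rw [_root_.map_add, _root_.map_mul, map_div₀, _root_.map_one, map_ofNat, he, hw₁]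
      ring
    rw [hcc, ht, add_assoc]
  have f4 : φR (X^2 + C (ε + Real.sin α * Real.cos β) * X + C (ε * Real.sin (α+β)))
      = t^2 + (e + (w₁+w₂)/2)*t + e*w₂ := by
    rw [_root_.map_add, _root_.map_add, map_pow, _root_.map_mul]
    have c1 : φR (C (ε + Real.sin α * Real.cos β)) = e + (w₁+w₂)/2 := by
      show ψR _ = _
      rw [_root_.map_add, hw3, he]
    have c2 : φR (C (ε * Real.sin (α+β))) = e * w₂ := by
      show ψR _ = _
      rw [_root_.map_mul, he, hw₂]
    rw [c1, c2, ht]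
  rw [_root_.map_mul, _root_.map_mul, _root_.map_mul, f1, f2, f3, f4]
  -- final algebraic identity
  have h1 : p * (t+e) = t * (t + e + w₁/2) := by
    rw [hp]; field_simp; ring
  have hN' : ((N:ℕ) : RatFunc ℝ) * ((N:ℕ) : RatFunc ℝ)⁻¹ = 1 := mul_inv_cancel₀ hNK
  have hu' : (t + e) * (t + e)⁻¹ = 1 := mul_inv_cancel₀ hte
  have h2 : p + (N:RatFunc ℝ) * q = t := by
    rw [hp, hq]
    linear_combination ((t+e)⁻¹*(e*w₁)/2 - w₁/2) * hN'
  have h3 : (p + (N:RatFunc ℝ) * r) * (t+e) = t^2 + (e + (w₁+w₂)/2) * t + e * w₂ := by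
    rw [hp, hr]
    linear_combination (((N:ℕ):RatFunc ℝ)*((N:ℕ):RatFunc ℝ)⁻¹*(e*w₂)/2 - e*w₁/2) * hu'
      + (w₂*(t+e)/2 + e*w₂/2) * hN'
  clear_value t e w₁ w₂ p q r
  obtain ⟨m, rfl⟩ : ∃ m, N = m + 2 := ⟨N - 2, by omega⟩
  have hm1 : m + 2 - 1 = m + 1 := by omega
  have hm2 : m + 2 - 2 = m := by omega
  have hpow : (t+e)^((m+2)*(m+2)) = (t+e)^((m+2)*(m+1)+1) * ((t+e)^m * (t+e)) := by
    rw [← pow_succ, ← pow_add]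
    congr 1
    ring
  have e1 : (t+e)^m * p^m = t^m * (t+e+w₁/2)^m := by
    rw [← mul_pow, mul_comm, h1, mul_pow]
  have e2 : (t+e) * (p + ((m+2 : ℕ):RatFunc ℝ) * r)
      = t^2 + (e + (w₁+w₂)/2) * t + e * w₂ := by
    rw [mul_comm]; exact h3
  rw [hm1, hm2, h2]
  calc (t+e)^((m+2)*(m+2)) * (p ^ m * t * (p + ((m+2 : ℕ):RatFunc ℝ) * r))
      = (t+e)^((m+2)*(m+1)+1)
          * (((t+e)^m * p^m) * ((t+e) * (p + ((m+2 : ℕ):RatFunc ℝ) * r)) * t) := by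
        rw [hpow]; ring
    _ = (t+e)^((m+2)*(m+1)+1) * ((t^m * (t+e+w₁/2)^m)
          * (t^2 + (e + (w₁+w₂)/2) * t + e * w₂) * t) := by rw [e1, e2]
    _ = t ^ (m+1) * (t+e)^((m+2)*((m+2) - 1)+1) * (t + e + w₁/2)^m
          * (t^2 + (e + (w₁+w₂)/2) * t + e * w₂) := by
        rw [show (m+2) - 1 = m + 1 by omega]
        ring
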